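/- A non-constant real-analytic function ψ on the 2-sphere S² that is invariant under the U(1)-action by rotations around the axis through points p and −p has a strict local extremum at p or is locally constant near p; in fact if ψ is non-constant on every neighborhood of p, it has a strict local extremum at p. -/

import Mathlib

open Submodule Module

section DetReflection

variable {E : Type*} [NormedAddCommGroup E] [InnerProductSpace ℝ E] [FiniteDimensional ℝ E]

lemma det_reflection_aux (K : Submodule ℝ E) :
    LinearMap.det ((reflection K).toLinearEquiv : E →ₗ[ℝ] E)
      = (-1 : ℝ) ^ (finrank ℝ Kᗮ) := by
  classical
  have hc : IsCompl K Kᗮ := Submodule.isCompl_orthogonal_of_hasOrthogonalProjection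
  set b₁ := finBasis ℝ K with hb₁
  set b₂ := finBasis ℝ Kᗮ with hb₂
  set b : Basis (Fin (finrank ℝ K) ⊕ Fin (finrank ℝ Kᗮ)) ℝ E :=
    (b₁.prod b₂).map (Submodule.prodEquivOfIsCompl K Kᗮ hc) with hb
  have hbl : ∀ i, b (Sum.inl i) = (b₁ i : E) := by
    intro i
    simp [hb, Basis.map_apply, Basis.prod_apply, Submodule.coe_prodEquivOfIsCompl']
  have hbr : ∀ i, b (Sum.inr i) = (b₂ i : E) := by
    intro i
    simp [hb, Basis.map_apply, Basis.prod_apply, Submodule.coe_prodEquivOfIsCompl']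
  rw [← LinearMap.det_toMatrix b]
  have hM : LinearMap.toMatrix b b ((reflection K).toLinearEquiv : E →ₗ[ℝ] E)
      = Matrix.diagonal (Sum.elim (fun _ => (1:ℝ)) (fun _ => (-1:ℝ))) := by
    ext i j
    rw [LinearMap.toMatrix_apply]
    rcases j with j | j
    · have : ((reflection K).toLinearEquiv : E →ₗ[ℝ] E) (b (Sum.inl j)) = b (Sum.inl j) := by
        rw [hbl]
        exact reflection_mem_subspace_eq_self (b₁ j).2
      rw [this, b.repr_self]
      rcases eq_or_ne i (Sum.inl j) with h | h
      · subst h; simp [Matrix.diagonal]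
      · simp [Matrix.diagonal, h, Finsupp.single_apply, Ne.symm h]
    · have : ((reflection K).toLinearEquiv : E →ₗ[ℝ] E) (b (Sum.inr j)) = -(b (Sum.inr j)) := by
        rw [hbr]
        exact reflection_mem_subspace_orthogonalComplement_eq_neg (b₂ j).2
      rw [this, map_neg, b.repr_self]
      rcases eq_or_ne i (Sum.inr j) with h | h
      · subst h; simp [Matrix.diagonal]
      · simp [Matrix.diagonal, h, Finsupp.single_apply, Ne.symm h]
  rw [hM, Matrix.det_diagonal, Fintype.prod_sum_type]
  simp

lemma det_reflection_hyperplane {w : E} (hw : w ≠ 0) :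
    LinearMap.det ((reflection (ℝ ∙ w)ᗮ).toLinearEquiv : E →ₗ[ℝ] E) = -1 := by
  rw [det_reflection_aux, Submodule.orthogonal_orthogonal, finrank_span_singleton hw, pow_one]

end DetReflection

local notation "⟪" x ", " y "⟫" => inner (𝕜 := ℝ) x y

lemma psi_latitude (ψ : EuclideanSpace ℝ (Fin 3) → ℝ)
    (p : EuclideanSpace ℝ (Fin 3))
    (hrot : ∀ R : EuclideanSpace ℝ (Fin 3) ≃ₗᵢ[ℝ] EuclideanSpace ℝ (Fin 3),
      R p = p → LinearMap.det (R.toLinearEquiv : EuclideanSpace ℝ (Fin 3) →ₗ[ℝ]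
        EuclideanSpace ℝ (Fin 3)) = 1 →
      ∀ x : EuclideanSpace ℝ (Fin 3), ‖x‖ = 1 → ψ (R x) = ψ x)
    {x y : EuclideanSpace ℝ (Fin 3)} (hx : ‖x‖ = 1) (hy : ‖y‖ = 1)
    (hin : ⟪p, x⟫ = ⟪p, y⟫) : ψ x = ψ y := by
  rcases eq_or_ne x y with rfl | hxy
  · rfl
  have hu : x - y ≠ 0 := sub_ne_zero.mpr hxy
  -- find w ≠ 0 orthogonal to both p and y
  set K : Submodule ℝ (EuclideanSpace ℝ (Fin 3)) := (ℝ ∙ p) ⊔ (ℝ ∙ y) with hK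
  have hKle : finrank ℝ K ≤ 2 := by
    have h1 : finrank ℝ (ℝ ∙ p) ≤ 1 := by
      simpa using finrank_span_le_card ({p} : Set (EuclideanSpace ℝ (Fin 3)))
    have h2 : finrank ℝ (ℝ ∙ y) ≤ 1 := by
      simpa using finrank_span_le_card ({y} : Set (EuclideanSpace ℝ (Fin 3)))
    have h3 := Submodule.finrank_sup_add_finrank_inf_eq (ℝ ∙ p) (ℝ ∙ y)
    rw [hK]
    omega
  have hKo : 0 < finrank ℝ Kᗮ := by
    have := K.finrank_add_finrank_orthogonal
    have h3 : finrank ℝ (EuclideanSpace ℝ (Fin 3)) = 3 := by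
      simp [finrank_euclideanSpace]
    omega
  obtain ⟨w, hwK, hw0⟩ : ∃ w ∈ Kᗮ, w ≠ 0 := by
    apply Submodule.exists_mem_ne_zero_of_ne_bot
    intro h
    rw [h] at hKo
    simp at hKo
  have hwp : ⟪w, p⟫ = 0 := by
    have : ⟪p, w⟫ = 0 := hwK p (le_sup_left (a := ℝ ∙ p) (b := ℝ ∙ y)
      (Submodule.mem_span_singleton_self p))
    rwa [real_inner_comm] at this
  have hwy : ⟪w, y⟫ = 0 := by
    have : ⟪y, w⟫ = 0 := hwK y (le_sup_right (a := ℝ ∙ p) (b := ℝ ∙ y)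
      (Submodule.mem_span_singleton_self y))
    rwa [real_inner_comm] at this
  set R₁ := reflection (ℝ ∙ (x - y))ᗮ with hR₁
  set R₂ := reflection (ℝ ∙ w)ᗮ with hR₂
  have hR₁p : R₁ p = p := by
    apply reflection_mem_subspace_eq_self
    rw [Submodule.mem_orthogonal_singleton_iff_inner_right]
    rw [inner_sub_left]
    rw [real_inner_comm x p, real_inner_comm y p] at *
    rw [hin]; ring
  have hR₂p : R₂ p = p := by
    apply reflection_mem_subspace_eq_self
    rw [Submodule.mem_orthogonal_singleton_iff_inner_right]
    exact hwp
  have hR₁x : R₁ x = y := reflection_sub (by rw [hx, hy])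
  have hR₂y : R₂ y = y := by
    apply reflection_mem_subspace_eq_self
    rw [Submodule.mem_orthogonal_singleton_iff_inner_right]
    exact hwy
  set R := R₁.trans R₂ with hR
  have hdet : LinearMap.det (R.toLinearEquiv : EuclideanSpace ℝ (Fin 3) →ₗ[ℝ]
      EuclideanSpace ℝ (Fin 3)) = 1 := by
    have hcomp : (R.toLinearEquiv : EuclideanSpace ℝ (Fin 3) →ₗ[ℝ] EuclideanSpace ℝ (Fin 3))
        = (R₂.toLinearEquiv : EuclideanSpace ℝ (Fin 3) →ₗ[ℝ] EuclideanSpace ℝ (Fin 3)) ∘ₗ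
          (R₁.toLinearEquiv : EuclideanSpace ℝ (Fin 3) →ₗ[ℝ] EuclideanSpace ℝ (Fin 3)) := by
      rfl
    rw [hcomp, LinearMap.det_comp, det_reflection_hyperplane hw0, det_reflection_hyperplane hu]
    norm_num
  have hRp : R p = p := by
    simp [hR, LinearIsometryEquiv.trans_apply, hR₁p, hR₂p]
  have := hrot R hRp hdet x hx
  have hRx : R x = y := by simp [hR, LinearIsometryEquiv.trans_apply, hR₁x, hR₂y]
  rw [hRx] at this
  exact this.symm

lemma analyticAt_rcos (t : ℝ) : AnalyticAt ℝ Real.cos t := by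
  have h1 : AnalyticAt ℝ Complex.cos ((t : ℝ) : ℂ) :=
    (Complex.differentiable_cos.analyticAt _).restrictScalars
  have h2 : AnalyticAt ℝ (fun x : ℝ => (x : ℂ)) t := Complex.ofRealCLM.analyticAt t
  have h3 : AnalyticAt ℝ (Complex.cos ∘ Complex.ofReal) t := h1.comp h2
  have h4 : AnalyticAt ℝ (⇑Complex.reCLM ∘ (Complex.cos ∘ Complex.ofReal)) t :=
    (Complex.reCLM.analyticAt _).comp h3
  have h5 : (⇑Complex.reCLM ∘ (Complex.cos ∘ Complex.ofReal)) = Real.cos := by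
    funext x; exact Complex.cos_ofReal_re x
  rwa [h5] at h4

lemma analyticAt_rsin (t : ℝ) : AnalyticAt ℝ Real.sin t := by
  have h1 : AnalyticAt ℝ Complex.sin ((t : ℝ) : ℂ) :=
    (Complex.differentiable_sin.analyticAt _).restrictScalars
  have h2 : AnalyticAt ℝ (fun x : ℝ => (x : ℂ)) t := Complex.ofRealCLM.analyticAt t
  have h3 : AnalyticAt ℝ (Complex.sin ∘ Complex.ofReal) t := h1.comp h2
  have h4 : AnalyticAt ℝ (⇑Complex.reCLM ∘ (Complex.sin ∘ Complex.ofReal)) t :=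
    (Complex.reCLM.analyticAt _).comp h3
  have h5 : (⇑Complex.reCLM ∘ (Complex.sin ∘ Complex.ofReal)) = Real.sin := by
    funext x; exact Complex.sin_ofReal_re x
  rwa [h5] at h4

/-- Let `ψ` be a real-analytic function on a neighborhood of the unit sphere
`S² ⊂ ℝ³`, invariant (on the sphere) under all rotations fixing `p` — i.e. under
every linear isometry of `ℝ³` of determinant `1` fixing `p`, which is exactly the
`U(1)` of rotations around the axis through `p` and `-p`. If `ψ` restricted to
the sphere is non-constant on every neighborhood of `p`, then `ψ|_{S²}` has a
strict local extremum at `p`. -/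
theorem strict_extremum_of_rotation_invariant_analytic
    (ψ : EuclideanSpace ℝ (Fin 3) → ℝ)
    (hψ : AnalyticOnNhd ℝ ψ Set.univ)
    (p : EuclideanSpace ℝ (Fin 3)) (hp : ‖p‖ = 1)
    (hrot : ∀ R : EuclideanSpace ℝ (Fin 3) ≃ₗᵢ[ℝ] EuclideanSpace ℝ (Fin 3),
      R p = p → LinearMap.det (R.toLinearEquiv : EuclideanSpace ℝ (Fin 3) →ₗ[ℝ]
        EuclideanSpace ℝ (Fin 3)) = 1 →
      ∀ x : EuclideanSpace ℝ (Fin 3), ‖x‖ = 1 → ψ (R x) = ψ x)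
    (hnc : ∀ t ∈ nhds p, ∃ x ∈ t, ‖x‖ = 1 ∧ ψ x ≠ ψ p) :
    (∃ t ∈ nhds p, ∀ x ∈ t, ‖x‖ = 1 → x ≠ p → ψ x < ψ p) ∨
    (∃ t ∈ nhds p, ∀ x ∈ t, ‖x‖ = 1 → x ≠ p → ψ p < ψ x) := by
  classical
  -- a unit vector orthogonal to p
  obtain ⟨v, hvp, hv⟩ : ∃ v : EuclideanSpace ℝ (Fin 3), ⟪p, v⟫ = 0 ∧ ‖v‖ = 1 := by
    have h1 : finrank ℝ (ℝ ∙ p) ≤ 1 := by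
      simpa using finrank_span_le_card ({p} : Set (EuclideanSpace ℝ (Fin 3)))
    have h2 := (ℝ ∙ p).finrank_add_finrank_orthogonal
    have h3 : finrank ℝ (EuclideanSpace ℝ (Fin 3)) = 3 := by simp
    have h0 : 0 < finrank ℝ (ℝ ∙ p)ᗮ := by omega
    obtain ⟨v₀, hv₀K, hv₀⟩ : ∃ w ∈ (ℝ ∙ p)ᗮ, w ≠ 0 := by
      apply Submodule.exists_mem_ne_zero_of_ne_bot
      intro h; rw [h] at h0; simp at h0
    refine ⟨‖v₀‖⁻¹ • v₀, ?_, ?_⟩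
    · rw [real_inner_smul_right,
        Submodule.mem_orthogonal_singleton_iff_inner_right.mp hv₀K]
      ring
    · rw [norm_smul, norm_inv, norm_norm, inv_mul_cancel₀ (norm_ne_zero_iff.mpr hv₀)]
  set γ : ℝ → EuclideanSpace ℝ (Fin 3) :=
    fun t => Real.cos t • p + Real.sin t • v with hγdef
  have hγinner : ∀ t, ⟪p, γ t⟫ = Real.cos t := by
    intro t
    rw [hγdef]
    simp only [inner_add_right, real_inner_smul_right, hvp]
    rw [real_inner_self_eq_norm_mul_norm, hp]
    ring
  have hγnorm : ∀ t, ‖γ t‖ = 1 := by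
    intro t
    have hsq : ‖γ t‖ ^ 2 = 1 := by
      rw [hγdef]
      have hcross : ⟪Real.cos t • p, Real.sin t • v⟫ = 0 := by
        rw [real_inner_smul_left, real_inner_smul_right, hvp]; ring
      rw [norm_add_sq_real, hcross]
      rw [norm_smul, norm_smul, hp, hv]
      simp only [Real.norm_eq_abs, mul_one, mul_zero, add_zero, sq_abs]
      nlinarith [Real.sin_sq_add_cos_sq t, sq_abs (Real.sin t), sq_abs (Real.cos t)]
    have hnn := norm_nonneg (γ t)
    nlinarith
  have hγ0 : γ 0 = p := by
    rw [hγdef]; simp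
  set f : ℝ → ℝ := fun t => ψ (γ t) with hfdef
  have hγan : ∀ t, AnalyticAt ℝ γ t := fun t =>
    ((analyticAt_rcos t).smul analyticAt_const).add
      ((analyticAt_rsin t).smul analyticAt_const)
  have hfan : ∀ t, AnalyticAt ℝ f t := fun t =>
    (hψ (γ t) (Set.mem_univ _)).comp (hγan t)
  have hfc : Continuous f := by
    rw [continuous_iff_continuousAt]; exact fun t => (hfan t).continuousAt
  have hf0 : f 0 = ψ p := by rw [hfdef]; simp [hγ0]
  have hψf : ∀ x : EuclideanSpace ℝ (Fin 3), ‖x‖ = 1 →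
      ψ x = f (Real.arccos ⟪p, x⟫) := by
    intro x hx
    apply psi_latitude ψ p hrot hx (hγnorm _)
    rw [hγinner, Real.cos_arccos]
    · have h := abs_real_inner_le_norm p x
      rw [hp, hx, one_mul] at h
      linarith [(abs_le.mp h).1]
    · have h := abs_real_inner_le_norm p x
      rw [hp, hx, one_mul] at h
      linarith [(abs_le.mp h).2]
  have hppinner : ⟪p, p⟫ = 1 := by
    rw [real_inner_self_eq_norm_mul_norm, hp]; norm_num
  have hm : Continuous fun x : EuclideanSpace ℝ (Fin 3) => Real.arccos ⟪p, x⟫ :=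
    Real.continuous_arccos.comp (continuous_const.inner continuous_id)
  have hpp0 : Real.arccos ⟪p, p⟫ = 0 := by rw [hppinner, Real.arccos_one]
  have hgan : AnalyticAt ℝ (fun t => f t - f 0) 0 := (hfan 0).sub analyticAt_const
  rcases hgan.eventually_eq_zero_or_eventually_ne_zero with hcase | hcase
  · exfalso
    have hU : (fun x : EuclideanSpace ℝ (Fin 3) => Real.arccos ⟪p, x⟫) ⁻¹'
        {t | f t - f 0 = 0} ∈ nhds p := by
      apply hm.continuousAt.preimage_mem_nhds
      rw [hpp0]
      exact hcase
    obtain ⟨x, hxU, hx1, hxne⟩ := hnc _ hU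
    have h2 : f (Real.arccos ⟪p, x⟫) - f 0 = 0 := hxU
    exact hxne (by rw [hψf x hx1, ← hf0]; linarith)
  · rw [eventually_nhdsWithin_iff] at hcase
    obtain ⟨ε, hε, hball⟩ := Metric.eventually_nhds_iff.mp hcase
    have hne : ∀ t ∈ Set.Ioo (0:ℝ) ε, f t ≠ f 0 := by
      intro t ht h
      have h1 : dist t 0 < ε := by
        rw [Real.dist_eq, sub_zero, abs_of_pos ht.1]; exact ht.2
      have h2 : t ∈ ({(0:ℝ)}ᶜ : Set ℝ) := by simp [ne_of_gt ht.1]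
      exact hball h1 h2 (by simp [h])
    have hsign : (∀ t ∈ Set.Ioo (0:ℝ) ε, f t < f 0) ∨
        (∀ t ∈ Set.Ioo (0:ℝ) ε, f 0 < f t) := by
      by_contra hcon
      push_neg at hcon
      obtain ⟨⟨a, ha, hfa⟩, ⟨b, hb, hfb⟩⟩ := hcon
      have hfa' : f 0 < f a := lt_of_le_of_ne hfa (Ne.symm (hne a ha))
      have hfb' : f b < f 0 := lt_of_le_of_ne hfb (hne b hb)
      rcases lt_trichotomy a b with hab | hab | hab
      · obtain ⟨c, hc, hfc'⟩ := intermediate_value_Icc' (le_of_lt hab) hfc.continuousOn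
          (Set.mem_Icc.mpr ⟨le_of_lt hfb', le_of_lt hfa'⟩)
        exact hne c ⟨lt_of_lt_of_le ha.1 hc.1, lt_of_le_of_lt hc.2 hb.2⟩ hfc'
      · rw [hab] at hfa'; linarith
      · obtain ⟨c, hc, hfc'⟩ := intermediate_value_Icc (le_of_lt hab) hfc.continuousOn
          (Set.mem_Icc.mpr ⟨le_of_lt hfb', le_of_lt hfa'⟩)
        exact hne c ⟨lt_of_lt_of_le hb.1 hc.1, lt_of_le_of_lt hc.2 ha.2⟩ hfc'
    set U := (fun x : EuclideanSpace ℝ (Fin 3) => Real.arccos ⟪p, x⟫) ⁻¹'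
      (Set.Iio ε) with hUdef
    have hUnhds : U ∈ nhds p := by
      apply hm.continuousAt.preimage_mem_nhds
      rw [hpp0]
      exact Iio_mem_nhds hε
    have key : ∀ x, x ∈ U → ‖x‖ = 1 → x ≠ p →
        Real.arccos ⟪p, x⟫ ∈ Set.Ioo (0:ℝ) ε := by
      intro x hxU hx hxp
      constructor
      · apply Real.arccos_pos.mpr
        have h1 : ⟪p, x⟫ ≤ 1 := by
          have h := real_inner_le_norm p x
          rw [hp, hx] at h
          simpa using h
        rcases lt_or_eq_of_le h1 with h | h
        · exact h
        · exfalso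
          apply hxp
          have hc : ⟪x, p⟫ = (1:ℝ) := by rw [real_inner_comm]; exact h
          have hxp2 : ‖x - p‖ ^ 2 = 0 := by
            rw [norm_sub_sq_real, hx, hp, hc]; ring
          have := pow_eq_zero_iff (n := 2) (by norm_num) |>.mp hxp2
          exact sub_eq_zero.mp (norm_eq_zero.mp this)
      · exact hxU
    rcases hsign with hs | hs
    · left
      refine ⟨U, hUnhds, fun x hxU hx hxp => ?_⟩
      rw [hψf x hx, ← hf0]
      exact hs _ (key x hxU hx hxp)
    · right
      refine ⟨U, hUnhds, fun x hxU hx hxp => ?_⟩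
      rw [hψf x hx, ← hf0]
      exact hs _ (key x hxU hx hxp)
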